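/- arXiv:2002.00096 — 3 statements merged into one kernel-verified Lean document; each statement's English description precedes it below -/
import Mathlib

section
/- Fix real T > 0 and δ > 0, and let s, w be complex numbers with |Im(s)|, |Im(w)| ≤ T and (k-1)/2 < Re(s), Re(w) and Re(s) + Re(w) < k - δ. Then as k → ∞ through even integers, (2π)^{k-s-w} Γ(w) / Γ(k-s) → 0, uniformly on this region. -/
open Complex


-- Log-convexity consequence: Γ(u)/Γ(u+d) ≤ (u+d-1)^(-d)
lemma aux_gamma_ratio (d u : ℝ) (hd : 0 < d) (hd1 : d ≤ 1) (hu : 1 ≤ u) :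
    Real.Gamma u ≤ Real.Gamma (u + d) * (u + d - 1) ^ (-d) := by
  have hx : (0:ℝ) < u + d - 1 := by linarith
  have hy : (0:ℝ) < u + d := by linarith
  have hu0 : (0:ℝ) < u := by linarith
  have hconv := Real.convexOn_log_Gamma.2 (Set.mem_Ioi.2 hx) (Set.mem_Ioi.2 hy)
    hd.le (by linarith : (0:ℝ) ≤ 1 - d) (by ring)
  have hcomb : d • (u + d - 1) + (1 - d) • (u + d) = u := by
    simp only [smul_eq_mul]; ring
  rw [hcomb] at hconv
  have hrec : Real.Gamma (u + d) = (u + d - 1) * Real.Gamma (u + d - 1) := by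
    have h := Real.Gamma_add_one hx.ne'
    rw [sub_add_cancel] at h
    exact h
  have hΓx : 0 < Real.Gamma (u + d - 1) := Real.Gamma_pos_of_pos hx
  have hΓy : 0 < Real.Gamma (u + d) := Real.Gamma_pos_of_pos hy
  have hΓu : 0 < Real.Gamma u := Real.Gamma_pos_of_pos hu0
  have hlogx : Real.log (Real.Gamma (u + d - 1))
      = Real.log (Real.Gamma (u + d)) - Real.log (u + d - 1) := by
    rw [hrec, Real.log_mul hx.ne' hΓx.ne']; ring
  simp only [Function.comp_apply, smul_eq_mul] at hconv
  rw [hlogx] at hconv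
  calc Real.Gamma u = Real.exp (Real.log (Real.Gamma u)) := (Real.exp_log hΓu).symm
    _ ≤ Real.exp (Real.log (Real.Gamma (u + d)) + (-d) * Real.log (u + d - 1)) := by
        apply Real.exp_le_exp.2; nlinarith
    _ = Real.Gamma (u + d) * (u + d - 1) ^ (-d) := by
        rw [Real.exp_add, Real.exp_log hΓy, Real.rpow_def_of_pos hx]; ring_nf


-- value of real beta integral
lemma aux_beta_value (u d : ℝ) (hu : 0 < u) (hd : 0 < d) :
    ∫ x in (0:ℝ)..1, x ^ (u - 1) * (1 - x) ^ (d - 1)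
      = Real.Gamma u * Real.Gamma d / Real.Gamma (u + d) := by
  have h1 : Complex.betaIntegral (u : ℂ) (d : ℂ)
      = ((∫ x in (0:ℝ)..1, x ^ (u - 1) * (1 - x) ^ (d - 1) : ℝ) : ℂ) := by
    rw [Complex.betaIntegral, ← intervalIntegral.integral_ofReal]
    apply intervalIntegral.integral_congr
    intro x hx
    rw [Set.uIcc_of_le zero_le_one] at hx
    simp only [Complex.ofReal_mul, Complex.ofReal_cpow hx.1,
      Complex.ofReal_cpow (by linarith [hx.2] : (0:ℝ) ≤ 1 - x)]
    push_cast
    ring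
  have h2 := Complex.Gamma_mul_Gamma_eq_betaIntegral
    (s := (u:ℂ)) (t := (d:ℂ)) (by simpa using hu) (by simpa using hd)
  rw [h1, ← Complex.ofReal_add, Complex.Gamma_ofReal, Complex.Gamma_ofReal,
    Complex.Gamma_ofReal, ← Complex.ofReal_mul, ← Complex.ofReal_mul] at h2
  have h3 := Complex.ofReal_injective h2
  have hne : Real.Gamma (u + d) ≠ 0 := (Real.Gamma_pos_of_pos (by linarith)).ne'
  field_simp
  linarith [h3]

lemma aux_beta_bound (w z : ℂ) (d : ℝ) (hw : 1 ≤ w.re) (hd : 0 < d)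
    (hdz : d ≤ z.re) (hz1 : z.re ≤ 1) :
    ‖Complex.betaIntegral w z‖
      ≤ Real.Gamma w.re * Real.Gamma d / Real.Gamma (w.re + d) := by
  have hd1 : d ≤ 1 := hdz.trans hz1
  have hu : 0 < w.re := by linarith
  set g : ℝ → ℝ := fun x => x ^ (w.re - 1) * (1 - x) ^ (d - 1) with hg
  have hgint : IntervalIntegrable g MeasureTheory.volume 0 1 := by
    have h1 : IntervalIntegrable (fun x : ℝ => (1 - x) ^ (d - 1)) MeasureTheory.volume 0 1 := by
      have := (intervalIntegral.intervalIntegrable_rpow' (a := 0) (b := 1)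
        (by linarith : (-1:ℝ) < d - 1)).comp_sub_left 1
      simpa using this.symm
    have h2 : ContinuousOn (fun x : ℝ => x ^ (w.re - 1)) (Set.uIcc (0:ℝ) 1) := by
      intro x hx
      exact (Real.continuousAt_rpow_const x (w.re - 1) (Or.inr (by linarith))).continuousWithinAt
    simpa [hg, mul_comm] using h1.continuousOn_mul h2
  have hbd : ‖Complex.betaIntegral w z‖ ≤ |∫ x in (0:ℝ)..1, g x| := by
    rw [Complex.betaIntegral]
    apply intervalIntegral.norm_integral_le_abs_of_norm_le _ hgint
    have hne1 : ∀ᵐ x : ℝ, x ≠ (1:ℝ) := by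
      refine MeasureTheory.ae_iff.2 ?_
      simp only [ne_eq, not_not]
      simpa using Real.volume_singleton (a := (1:ℝ))
    filter_upwards [MeasureTheory.ae_restrict_mem measurableSet_uIoc,
      MeasureTheory.ae_restrict_of_ae hne1] with x hx hx1'
    rw [Set.uIoc_of_le zero_le_one] at hx
    obtain ⟨hx0, hx1⟩ := hx
    · have hx1'' : x < 1 := lt_of_le_of_ne hx1 hx1'
      have h1x : (0:ℝ) < 1 - x := by linarith
      have e1 : ‖(x:ℂ) ^ (w - 1)‖ = x ^ (w.re - 1) := by
        rw [Complex.norm_cpow_eq_rpow_re_of_pos hx0]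
        norm_num
      have e2 : ‖(1 - (x:ℂ)) ^ (z - 1)‖ = (1 - x) ^ (z.re - 1) := by
        have : (1 - (x:ℂ)) = ((1 - x : ℝ) : ℂ) := by push_cast; ring
        rw [this, Complex.norm_cpow_eq_rpow_re_of_pos h1x]
        norm_num
      rw [norm_mul, e1, e2, hg]
      have : (1 - x) ^ (z.re - 1) ≤ (1 - x) ^ (d - 1) :=
        Real.rpow_le_rpow_of_exponent_ge h1x (by linarith) (by linarith)
      have hxp : (0:ℝ) ≤ x ^ (w.re - 1) := Real.rpow_nonneg hx0.le _
      exact mul_le_mul_of_nonneg_left this hxp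
  rw [aux_beta_value w.re d hu hd] at hbd
  have hnn : (0:ℝ) ≤ Real.Gamma w.re * Real.Gamma d / Real.Gamma (w.re + d) :=
    div_nonneg (mul_nonneg (Real.Gamma_pos_of_pos hu).le (Real.Gamma_pos_of_pos hd).le)
      (Real.Gamma_pos_of_pos (by linarith)).le
  rwa [_root_.abs_of_nonneg hnn] at hbd

/-- Uniformly on the region `|Im s|,|Im w| ≤ T`, `(k-1)/2 < Re s, Re w`,
`Re s + Re w < k - δ`, one has `(2π)^{k-s-w} Γ(w)/Γ(k-s) → 0` as even `k → ∞`. -/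
theorem gamma_ratio_tendsto_zero (T δ : ℝ) (hT : 0 < T) (hδ : 0 < δ) :
    ∀ ε > 0, ∃ K : ℕ, ∀ k : ℕ, Even k → K ≤ k → ∀ s w : ℂ,
      |s.im| ≤ T → |w.im| ≤ T →
      ((k : ℝ) - 1) / 2 < s.re → ((k : ℝ) - 1) / 2 < w.re →
      s.re + w.re < (k : ℝ) - δ →
      ‖(2 * Real.pi : ℂ) ^ ((k : ℂ) - s - w) * Complex.Gamma w / Complex.Gamma ((k : ℂ) - s)‖
        < ε := by
  intro ε hε
  set d := min δ 1 with hdd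
  have hd0 : 0 < d := lt_min hδ one_pos
  have hd1 : d ≤ 1 := min_le_right _ _
  have hdδ : d ≤ δ := min_le_left _ _
  -- compact region and minimum of ‖Γ‖ on it
  set S : Set ℂ := Set.Icc d 1 ×ℂ Set.Icc (-(2*T)) (2*T) with hS
  have hScomp : IsCompact S :=
    Metric.isCompact_of_isClosed_isBounded (isClosed_Icc.reProdIm isClosed_Icc)
      ((Metric.isBounded_Icc _ _).reProdIm (Metric.isBounded_Icc _ _))
  have hSne : S.Nonempty := by
    refine ⟨(d:ℂ), ?_⟩
    rw [hS, Complex.mem_reProdIm]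
    simp only [Complex.ofReal_re, Complex.ofReal_im, Set.mem_Icc]
    refine ⟨⟨le_rfl, hd1⟩, ⟨by linarith, by linarith⟩⟩
  have hcont : ContinuousOn (fun z => ‖Complex.Gamma z‖) S := by
    intro z hz
    rw [hS, Complex.mem_reProdIm] at hz
    have hne : ∀ m : ℕ, z ≠ -m := by
      intro m h
      have h1 : z.re = -(m:ℝ) := by rw [h]; simp
      have h2 : d ≤ z.re := hz.1.1
      have h3 : (0:ℝ) ≤ (m:ℝ) := Nat.cast_nonneg m
      linarith
    exact ((Complex.differentiableAt_Gamma z hne).continuousAt.norm).continuousWithinAt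
  obtain ⟨z₀, hz₀S, hmin'⟩ := hScomp.exists_isMinOn hSne hcont
  have hmin : ∀ y ∈ S, ‖Complex.Gamma z₀‖ ≤ ‖Complex.Gamma y‖ := fun y hy => hmin' hy
  set c := ‖Complex.Gamma z₀‖ with hc
  have hc0 : 0 < c := by
    rw [hc, norm_pos_iff]
    apply Complex.Gamma_ne_zero_of_re_pos
    have hm := hz₀S
    rw [hS, Complex.mem_reProdIm, Set.mem_Icc, Set.mem_Icc] at hm
    linarith [hm.1.1]
  -- choose K
  have hb : Filter.Tendsto (fun k : ℕ => ((k:ℝ)-1)/2 + d - 1) Filter.atTop Filter.atTop := by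
    have heq : ∀ k : ℕ, ((k:ℝ)-1)/2 + d - 1 = (k:ℝ)/2 + (d - 3/2) := fun k => by ring
    simp_rw [heq]
    exact Filter.tendsto_atTop_add_const_right _ _
      (tendsto_natCast_atTop_atTop.atTop_div_const two_pos)
  have htend : Filter.Tendsto
      (fun k : ℕ => 2*Real.pi * Real.Gamma d / c * ((((k:ℝ)-1)/2 + d - 1) ^ (-d)))
      Filter.atTop (nhds 0) := by
    rw [show (0:ℝ) = 2*Real.pi*Real.Gamma d / c * 0 by ring]
    exact ((tendsto_rpow_neg_atTop hd0).comp hb).const_mul _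
  obtain ⟨K, hK⟩ := Filter.eventually_atTop.1
    ((htend.eventually (gt_mem_nhds hε)).and (Filter.eventually_ge_atTop 3))
  refine ⟨K, fun k _ hkK s w hsim hwim hsre hwre hsw => ?_⟩
  obtain ⟨hKb, hk3⟩ := hK k hkK
  have hk3' : (3:ℝ) ≤ (k:ℝ) := by exact_mod_cast hk3
  set z : ℂ := (k:ℂ) - s - w with hz
  have hzre : z.re = (k:ℝ) - s.re - w.re := by simp [hz]
  have hzim : z.im = -s.im - w.im := by simp [hz]
  have hwre1 : 1 ≤ w.re := by linarith
  have hzre_d : d ≤ z.re := by rw [hzre]; linarith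
  have hzre_ub : z.re ≤ 1 := by rw [hzre]; linarith
  have hzre_lt1 : z.re < 1 := by rw [hzre]; linarith
  have hz0 : 0 < z.re := lt_of_lt_of_le hd0 hzre_d
  have hw0 : 0 < w.re := by linarith
  have hks0 : 0 < ((k:ℂ) - s).re := by
    simp only [Complex.sub_re, Complex.natCast_re]
    linarith
  have hΓks : Complex.Gamma ((k:ℂ) - s) ≠ 0 := Complex.Gamma_ne_zero_of_re_pos hks0
  have hΓz : Complex.Gamma z ≠ 0 := Complex.Gamma_ne_zero_of_re_pos hz0
  -- rewrite via Beta
  have hbeta := Complex.Gamma_mul_Gamma_eq_betaIntegral (s := w) (t := z) hw0 hz0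
  have hwz : w + z = (k:ℂ) - s := by rw [hz]; ring
  rw [hwz] at hbeta
  have key : (2 * Real.pi : ℂ) ^ z * Complex.Gamma w / Complex.Gamma ((k : ℂ) - s)
      = (2 * Real.pi : ℂ) ^ z * Complex.betaIntegral w z / Complex.Gamma z := by
    field_simp
    linear_combination hbeta
  rw [key, norm_div, norm_mul]
  -- bounds
  have h2pi : ‖(2*Real.pi:ℂ) ^ z‖ ≤ 2*Real.pi := by
    rw [show ((2*Real.pi:ℂ)) = ((2*Real.pi:ℝ):ℂ) by push_cast; ring,
      Complex.norm_cpow_eq_rpow_re_of_pos Real.two_pi_pos]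
    calc (2*Real.pi) ^ z.re ≤ (2*Real.pi) ^ (1:ℝ) :=
          Real.rpow_le_rpow_of_exponent_le (by nlinarith [Real.pi_gt_three]) hzre_ub
      _ = 2*Real.pi := Real.rpow_one _
  have hB : ‖Complex.betaIntegral w z‖ ≤ Real.Gamma d * (w.re + d - 1) ^ (-d) := by
    refine (aux_beta_bound w z d hwre1 hd0 hzre_d hzre_ub).trans ?_
    have hgr := aux_gamma_ratio d w.re hd0 hd1 hwre1
    have hΓud : 0 < Real.Gamma (w.re + d) := Real.Gamma_pos_of_pos (by linarith)
    have hΓd : 0 < Real.Gamma d := Real.Gamma_pos_of_pos hd0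
    rw [div_le_iff₀ hΓud]
    nlinarith [Real.rpow_nonneg (show (0:ℝ) ≤ w.re + d - 1 by linarith) (-d)]
  have hrpow : (w.re + d - 1) ^ (-d) ≤ (((k:ℝ)-1)/2 + d - 1) ^ (-d) :=
    Real.rpow_le_rpow_of_nonpos (by linarith) (by linarith) (by linarith)
  have hΓzlb : c ≤ ‖Complex.Gamma z‖ := by
    apply hmin
    rw [hS, Complex.mem_reProdIm]
    constructor
    · exact ⟨hzre_d, hzre_ub⟩
    · rw [hzim]
      have h1 := abs_le.1 hsim
      have h2 := abs_le.1 hwim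
      rw [Set.mem_Icc]
      constructor <;> linarith [h1.1, h1.2, h2.1, h2.2]
  have hΓd : 0 < Real.Gamma d := Real.Gamma_pos_of_pos hd0
  have hB2 : ‖Complex.betaIntegral w z‖
      ≤ Real.Gamma d * ((((k:ℝ)-1)/2 + d - 1) ^ (-d)) :=
    hB.trans (mul_le_mul_of_nonneg_left hrpow hΓd.le)
  have hrnn : (0:ℝ) ≤ (((k:ℝ)-1)/2 + d - 1) ^ (-d) :=
    Real.rpow_nonneg (by linarith) _
  calc ‖(2*Real.pi:ℂ)^z‖ * ‖Complex.betaIntegral w z‖ / ‖Complex.Gamma z‖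
      ≤ 2*Real.pi * (Real.Gamma d * ((((k:ℝ)-1)/2 + d - 1) ^ (-d))) / c :=
        div_le_div₀ (by positivity)
          (mul_le_mul h2pi hB2 (norm_nonneg _) Real.two_pi_pos.le) hc0 hΓzlb
    _ = 2*Real.pi * Real.Gamma d / c * ((((k:ℝ)-1)/2 + d - 1) ^ (-d)) := by ring
    _ < ε := hKb
end

section
/- Fix real T > 0 and δ > 0. For z in the region k/2 - 1/2 ≤ Re(z) ≤ k/2 - δ, |Im(z)| ≤ T, the function g(z) = (2π)^{k-2z} Γ(z)/Γ(k-z) satisfies sup_z |g'(z)| → 0 as k → ∞ through even integers. -/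
open Complex MeasureTheory

/-- Log-convexity bound: `x·Γ(x) ≤ Γ(x+δ)·(x+δ)^(1-δ)` for `0 < δ ≤ 1`, `0 < x`. -/
lemma gamma_ratio_aux {x d : ℝ} (hd : 0 < d) (hd1 : d ≤ 1) (hx : 0 < x) :
    x * Real.Gamma x ≤ Real.Gamma (x + d) * (x + d) ^ (1 - d) := by
  have hxd : 0 < x + d := by linarith
  have h1 : (0:ℝ) ≤ d := hd.le
  have h2 : (0:ℝ) ≤ 1 - d := by linarith
  have hc := Real.convexOn_log_Gamma.2 (Set.mem_Ioi.mpr hxd)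
    (Set.mem_Ioi.mpr (by linarith : (0:ℝ) < x + d + 1)) h1 h2 (by ring)
  have hpt : d • (x + d) + (1 - d) • (x + d + 1) = x + 1 := by
    simp only [smul_eq_mul]; ring
  rw [hpt] at hc
  simp only [Function.comp_apply, smul_eq_mul] at hc
  have hG1 : Real.Gamma (x + 1) = x * Real.Gamma x := Real.Gamma_add_one hx.ne'
  have hG2 : Real.Gamma (x + d + 1) = (x + d) * Real.Gamma (x + d) :=
    Real.Gamma_add_one hxd.ne'
  rw [hG1, hG2, Real.log_mul hxd.ne' (Real.Gamma_pos_of_pos hxd).ne'] at hc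
  have key : Real.log (x * Real.Gamma x)
      ≤ Real.log (Real.Gamma (x + d)) + (1 - d) * Real.log (x + d) := by
    nlinarith [hc]
  have hpos : 0 < x * Real.Gamma x := mul_pos hx (Real.Gamma_pos_of_pos hx)
  have := Real.exp_le_exp.mpr key
  rw [Real.exp_log hpos, Real.exp_add, Real.exp_log (Real.Gamma_pos_of_pos hxd), mul_comm (1-d)] at this
  rwa [
    ← Real.rpow_def_of_pos hxd] at this

/-- Norm of complex Gamma ratio bounded by the real Gamma ratio, via the Beta integral. -/
lemma gamma_ratio_norm_le {w : ℂ} {c : ℝ} (hw : 0 < w.re) (hc : 0 < c) :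
    ‖Complex.Gamma w / Complex.Gamma (w + (c : ℂ))‖
      ≤ Real.Gamma w.re / Real.Gamma (w.re + c) := by
  set x := w.re with hx
  have hxc : (0:ℝ) < x + c := by positivity
  have hGc : (0:ℝ) < Real.Gamma c := Real.Gamma_pos_of_pos hc
  have hGx : (0:ℝ) < Real.Gamma x := Real.Gamma_pos_of_pos hw
  have hGxc : (0:ℝ) < Real.Gamma (x + c) := Real.Gamma_pos_of_pos hxc
  set Breal : ℝ := Real.Gamma x * Real.Gamma c / Real.Gamma (x + c) with hBreal
  have hg : ∀ t ∈ Set.Ioo (0:ℝ) 1,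
      (t:ℂ) ^ ((x:ℂ) - 1) * ((1:ℂ) - t) ^ ((c:ℂ) - 1)
        = ((t ^ (x - 1) * (1 - t) ^ (c - 1) : ℝ) : ℂ) := by
    intro t ht
    rw [Complex.ofReal_mul, Complex.ofReal_cpow ht.1.le,
      Complex.ofReal_cpow (by linarith [ht.2] : (0:ℝ) ≤ 1 - t)]
    push_cast
    ring
  have hBx : Complex.betaIntegral (x:ℂ) (c:ℂ) = (Breal : ℂ) := by
    have h := Complex.Gamma_mul_Gamma_eq_betaIntegral
      (s := (x:ℂ)) (t := (c:ℂ)) (by simpa using hw) (by simpa using hc)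
    have hne : Complex.Gamma ((x:ℂ) + (c:ℂ)) ≠ 0 := by
      apply Complex.Gamma_ne_zero_of_re_pos; simpa using hxc
    simp only [← Complex.ofReal_add, Complex.Gamma_ofReal] at h hne
    rw [hBreal, Complex.ofReal_div, Complex.ofReal_mul, eq_div_iff hne, h]; ring
  have hIoo : ∫ t in Set.Ioo (0:ℝ) 1, t ^ (x - 1) * (1 - t) ^ (c - 1) = Breal := by
    have h1 : Complex.betaIntegral (x:ℂ) (c:ℂ)
        = ∫ t in Set.Ioo (0:ℝ) 1, ((t ^ (x - 1) * (1 - t) ^ (c - 1) : ℝ) : ℂ) := by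
      rw [Complex.betaIntegral, intervalIntegral.integral_of_le zero_le_one,
        MeasureTheory.integral_Ioc_eq_integral_Ioo]
      exact MeasureTheory.setIntegral_congr_fun measurableSet_Ioo hg
    rw [hBx] at h1
    have h1' : (Breal : ℂ) = ∫ t in Set.Ioo (0:ℝ) 1,
        (RCLike.ofReal (t ^ (x - 1) * (1 - t) ^ (c - 1)) : ℂ) := h1
    rw [_root_.integral_ofReal] at h1'
    exact (RCLike.ofReal_inj.mp h1'.symm)
  have hnorm : ‖Complex.betaIntegral w (c:ℂ)‖ ≤ Breal := by
    rw [Complex.betaIntegral]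
    refine le_trans (intervalIntegral.norm_integral_le_integral_norm zero_le_one) ?_
    rw [intervalIntegral.integral_of_le zero_le_one,
      MeasureTheory.integral_Ioc_eq_integral_Ioo, ← hIoo]
    apply le_of_eq
    apply MeasureTheory.setIntegral_congr_fun measurableSet_Ioo
    intro t ht
    have h1t : (0:ℝ) < 1 - t := by linarith [ht.2]
    simp only [norm_mul]
    rw [Complex.norm_cpow_eq_rpow_re_of_pos ht.1,
      show ((1:ℂ) - (t:ℂ)) = ((1 - t : ℝ) : ℂ) by push_cast; ring,
      Complex.norm_cpow_eq_rpow_re_of_pos h1t]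
    simp [hx]
  have hGwc : Complex.Gamma (w + (c:ℂ)) ≠ 0 := by
    apply Complex.Gamma_ne_zero_of_re_pos
    simp only [Complex.add_re, Complex.ofReal_re]
    linarith
  have hid := Complex.Gamma_mul_Gamma_eq_betaIntegral (s := w) (t := (c:ℂ))
    hw (by simpa using hc)
  have hdiv : Complex.Gamma w / Complex.Gamma (w + (c:ℂ))
      = Complex.betaIntegral w (c:ℂ) / (Real.Gamma c : ℂ) := by
    rw [Complex.Gamma_ofReal] at hid
    rw [div_eq_div_iff hGwc (by exact_mod_cast hGc.ne')]
    rw [hid]; ring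
  rw [hdiv, norm_div, Complex.norm_real, Real.norm_eq_abs, abs_of_pos hGc,
    div_le_div_iff₀ hGc hGxc]
  calc ‖Complex.betaIntegral w (c:ℂ)‖ * Real.Gamma (x + c)
      ≤ Breal * Real.Gamma (x + c) := mul_le_mul_of_nonneg_right hnorm hGxc.le
    _ = Real.Gamma x * Real.Gamma c := by rw [hBreal, div_mul_cancel₀ _ hGxc.ne']

/-- Pointwise bound for `g` on the enlarged region. -/
lemma g_norm_bound {k : ℕ} {d : ℝ} (hd0 : 0 < d) (hd1 : d ≤ 1/2) (hk : 8 ≤ k)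
    {w : ℂ} (h1 : (k:ℝ)/2 - 1 ≤ w.re) (h2 : w.re ≤ (k:ℝ)/2 - d/2) :
    ‖(2 * Real.pi : ℂ) ^ ((k : ℂ) - 2 * w) * Complex.Gamma w / Complex.Gamma ((k : ℂ) - w)‖
      ≤ (2*Real.pi) ^ (2:ℝ) * (2 * (((k:ℝ)/2 - 1) ^ (-d))) := by
  have hk8 : (8:ℝ) ≤ (k:ℝ) := by exact_mod_cast hk
  set x : ℝ := w.re with hx_def
  have hx3 : (3:ℝ) ≤ x := by linarith
  have hx0 : (0:ℝ) < x := by linarith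
  set c : ℝ := (k:ℝ) - 2*x with hc_def
  have hcd : d ≤ c := by simp only [hc_def]; linarith
  have hc2 : c ≤ 2 := by simp only [hc_def]; linarith
  have hc0 : 0 < c := lt_of_lt_of_le hd0 hcd
  -- the conjugation trick
  have hΓnorm : ‖Complex.Gamma ((k:ℂ) - w)‖ = ‖Complex.Gamma (w + (c:ℂ))‖ := by
    have hconj : (k:ℂ) - w = (starRingEnd ℂ) (w + (c:ℂ)) := by
      apply Complex.ext
      · simp [hc_def]; ring
      · simp
    rw [hconj, Complex.Gamma_conj]
    simp [Complex.norm_conj]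
  -- the cpow factor
  have hbase : (2 * Real.pi : ℂ) = ((2 * Real.pi : ℝ) : ℂ) := by push_cast; ring
  have h2π : (0:ℝ) < 2 * Real.pi := by positivity
  have hre : ((k:ℂ) - 2 * w).re = c := by
    simp [hc_def, Complex.sub_re, Complex.mul_re, hx_def]
  have hA : ‖(2 * Real.pi : ℂ) ^ ((k : ℂ) - 2 * w)‖ ≤ (2*Real.pi) ^ (2:ℝ) := by
    rw [hbase, Complex.norm_cpow_eq_rpow_re_of_pos h2π, hre]
    exact Real.rpow_le_rpow_of_exponent_le (by nlinarith [Real.pi_gt_three]) hc2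
  -- the Gamma factor
  have hB : ‖Complex.Gamma w / Complex.Gamma ((k:ℂ) - w)‖
      ≤ Real.Gamma x / Real.Gamma (x + c) := by
    rw [norm_div, hΓnorm, ← norm_div]
    exact gamma_ratio_norm_le hx0 hc0
  -- real Gamma ratio estimates
  have hmono : Real.Gamma (x + d) ≤ Real.Gamma (x + c) := by
    rcases eq_or_lt_of_le hcd with h | h
    · rw [h]
    · exact (Real.Gamma_strictMonoOn_Ici (by simp; linarith) (by simp; linarith)
        (by linarith)).le
  have hGd : 0 < Real.Gamma (x + d) := Real.Gamma_pos_of_pos (by linarith)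
  have hGc : 0 < Real.Gamma (x + c) := Real.Gamma_pos_of_pos (by linarith)
  have hGx : 0 < Real.Gamma x := Real.Gamma_pos_of_pos hx0
  have hratio1 : Real.Gamma x / Real.Gamma (x + c) ≤ Real.Gamma x / Real.Gamma (x + d) := by
    gcongr
  have hkey := gamma_ratio_aux hd0 (by linarith) hx0
  have hratio2 : Real.Gamma x / Real.Gamma (x + d) ≤ (x + d) ^ (1 - d) / x := by
    rw [div_le_div_iff₀ hGd hx0]
    nlinarith [hkey]
  have hrpow : (x + d) ^ (1 - d) ≤ 2 * x ^ (1 - d) := by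
    calc (x + d) ^ (1 - d) ≤ (2*x) ^ (1 - d) := by
          apply Real.rpow_le_rpow (by linarith) (by linarith) (by linarith)
      _ = 2 ^ (1 - d) * x ^ (1 - d) := Real.mul_rpow (by norm_num) hx0.le
      _ ≤ 2 * x ^ (1 - d) := by
          apply mul_le_mul_of_nonneg_right _ (Real.rpow_nonneg hx0.le _)
          calc (2:ℝ) ^ (1 - d) ≤ 2 ^ (1:ℝ) :=
                Real.rpow_le_rpow_of_exponent_le (by norm_num) (by linarith)
            _ = 2 := Real.rpow_one 2
  have hxsplit : x ^ (1 - d) / x = x ^ (-d) := by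
    rw [show (1:ℝ) - d = 1 + (-d) by ring, Real.rpow_add hx0, Real.rpow_one]
    field_simp
  have hratio3 : Real.Gamma x / Real.Gamma (x + c) ≤ 2 * x ^ (-d) := by
    calc Real.Gamma x / Real.Gamma (x + c) ≤ (x + d) ^ (1 - d) / x :=
          le_trans hratio1 hratio2
      _ ≤ 2 * x ^ (1 - d) / x := by gcongr
      _ = 2 * (x ^ (1 - d) / x) := by ring
      _ = 2 * x ^ (-d) := by rw [hxsplit]
  have hlast : x ^ (-d) ≤ ((k:ℝ)/2 - 1) ^ (-d) := by
    rw [Real.rpow_neg hx0.le, Real.rpow_neg (by linarith)]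
    apply inv_anti₀ (Real.rpow_pos_of_pos (by linarith) _)
    exact Real.rpow_le_rpow (by linarith) h1 hd0.le
  -- combine
  rw [mul_div_assoc, norm_mul]
  have hB' : ‖Complex.Gamma w / Complex.Gamma ((k:ℂ) - w)‖
      ≤ 2 * (((k:ℝ)/2 - 1) ^ (-d)) := by
    refine le_trans hB (le_trans hratio3 (by nlinarith [hlast, Real.rpow_nonneg (show (0:ℝ) ≤ x from hx0.le) (-d)]))
  exact mul_le_mul hA hB' (norm_nonneg _) (by positivity)

/-- On the region `k/2 - 1/2 ≤ Re z ≤ k/2 - δ`, `|Im z| ≤ T`, the supremum of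
`|g'(z)|` for `g(z) = (2π)^{k-2z} Γ(z)/Γ(k-z)` tends to `0` as even `k → ∞`. -/
theorem sup_deriv_gamma_quotient_tendsto_zero (T δ : ℝ) (hT : 0 < T) (hδ : 0 < δ) :
    ∀ ε > 0, ∃ K : ℕ, ∀ k : ℕ, Even k → K ≤ k → ∀ z : ℂ,
      (k : ℝ) / 2 - 1 / 2 ≤ z.re → z.re ≤ (k : ℝ) / 2 - δ → |z.im| ≤ T →
      ‖deriv (fun z : ℂ => (2 * Real.pi : ℂ) ^ ((k : ℂ) - 2 * z)
          * Complex.Gamma z / Complex.Gamma ((k : ℂ) - z)) z‖ < ε := by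
  intro ε hε
  set d : ℝ := min δ (1/2) with hd_def
  have hd0 : 0 < d := lt_min hδ (by norm_num)
  have hd1 : d ≤ 1/2 := min_le_right _ _
  have hdδ : d ≤ δ := min_le_left _ _
  set r : ℝ := d/2 with hr_def
  have hr0 : 0 < r := by positivity
  have h1 : Filter.Tendsto (fun k : ℕ => (k:ℝ)/2 - 1) Filter.atTop Filter.atTop := by
    apply Filter.tendsto_atTop_add_const_right
    exact (tendsto_natCast_atTop_atTop).atTop_div_const (by norm_num)
  have h2 : Filter.Tendsto (fun k : ℕ => ((k:ℝ)/2 - 1) ^ (-d)) Filter.atTop (nhds 0) :=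
    (tendsto_rpow_neg_atTop hd0).comp h1
  have h3 : ∀ᶠ k : ℕ in Filter.atTop,
      ((k:ℝ)/2 - 1) ^ (-d) < ε * r / ((2*Real.pi) ^ (2:ℝ) * 2) :=
    h2.eventually_lt_const (by positivity)
  obtain ⟨K0, hK0⟩ := Filter.eventually_atTop.mp (h3.and (Filter.eventually_ge_atTop 8))
  refine ⟨K0, fun k _ hk z hz1 hz2 _ => ?_⟩
  obtain ⟨hsmall, hk8⟩ := hK0 k hk
  set f : ℂ → ℂ := fun w => (2 * Real.pi : ℂ) ^ ((k : ℂ) - 2 * w)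
      * Complex.Gamma w / Complex.Gamma ((k : ℂ) - w) with hf_def
  have hk8' : (8:ℝ) ≤ (k:ℝ) := by exact_mod_cast hk8
  have hreg : ∀ w : ℂ, w ∈ Metric.closedBall z r →
      (k:ℝ)/2 - 1 ≤ w.re ∧ w.re ≤ (k:ℝ)/2 - d/2 := by
    intro w hw
    have hdist : ‖w - z‖ ≤ r := by
      simpa [Metric.mem_closedBall, Complex.dist_eq] using hw
    have hre : |w.re - z.re| ≤ r :=
      le_trans (by simpa using Complex.abs_re_le_norm (w - z)) hdist
    rw [abs_le] at hre
    have hzd : z.re ≤ (k:ℝ)/2 - d := le_trans hz2 (by linarith)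
    constructor
    · linarith [hre.1]
    · linarith [hre.2]
  have hdiff : DiffContOnCl ℂ f (Metric.ball z r) := by
    apply DifferentiableOn.diffContOnCl
    rw [closure_ball z hr0.ne']
    intro w hw
    obtain ⟨hw1, hw2⟩ := hreg w hw
    have hwre : 0 < w.re := by linarith
    have hkw : 0 < ((k:ℂ) - w).re := by
      simp only [Complex.sub_re, Complex.natCast_re]
      linarith
    refine DifferentiableAt.differentiableWithinAt ?_
    apply DifferentiableAt.div
    · apply DifferentiableAt.mul
      · refine DifferentiableAt.const_cpow (by fun_prop) (Or.inl ?_)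
        simp [Real.pi_ne_zero]
      · apply Complex.differentiableAt_Gamma
        intro m hm
        have hre := congrArg Complex.re hm
        simp only [Complex.neg_re, Complex.natCast_re] at hre
        have : (0:ℝ) ≤ (m:ℝ) := Nat.cast_nonneg m
        linarith [hre ▸ hwre]
    · have hcomp : (fun w : ℂ => Complex.Gamma ((k:ℂ) - w))
          = Complex.Gamma ∘ (fun w : ℂ => (k:ℂ) - w) := rfl
      rw [hcomp]
      apply DifferentiableAt.comp
      · apply Complex.differentiableAt_Gamma
        intro m hm
        have hre := congrArg Complex.re hm
        simp only [Complex.sub_re, Complex.neg_re, Complex.natCast_re] at hre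
        have : (0:ℝ) ≤ (m:ℝ) := Nat.cast_nonneg m
        linarith
      · fun_prop
    · exact Complex.Gamma_ne_zero_of_re_pos hkw
  have hC : ∀ w ∈ Metric.sphere z r,
      ‖f w‖ ≤ (2*Real.pi) ^ (2:ℝ) * (2 * (((k:ℝ)/2 - 1) ^ (-d))) := by
    intro w hw
    obtain ⟨hw1, hw2⟩ := hreg w (Metric.sphere_subset_closedBall hw)
    exact g_norm_bound hd0 hd1 hk8 hw1 hw2
  have hb := Complex.norm_deriv_le_of_forall_mem_sphere_norm_le hr0 hdiff hC
  refine lt_of_le_of_lt hb ?_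
  rw [div_lt_iff₀ hr0]
  have hπ : (0:ℝ) < (2*Real.pi) ^ (2:ℝ) := by positivity
  calc (2*Real.pi)^(2:ℝ) * (2 * ((k:ℝ)/2-1)^(-d))
      < (2*Real.pi)^(2:ℝ) * (2 * (ε*r/((2*Real.pi)^(2:ℝ)*2))) := by gcongr
    _ = ε * r := by field_simp
end

section
/- For every integer n ≥ 1, the set of 2×2 integer matrices of determinant n equals the set of matrices of the form [[ar, nb₀/r + (t+rℓ)a], [cr, nd₀/r + (t+rℓ)c]] where r ranges over positive divisors of n, (a,c) ranges over coprime pairs of integers (not both zero), b₀, d₀ are integers fixed (depending on (a,c)) with ad₀ - b₀c = 1, t ranges over Z/rZ (lifted to {0,...,r-1}), and ℓ ranges over Z; moreover distinct parameter tuples give distinct matrices. -/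
open Matrix

/-- Parametrization of integral `2×2` matrices of determinant `n`: fixing for every
coprime pair `(a,c)` integers `(b₀,d₀)` with `a d₀ - b₀ c = 1`, the map
`((a,c),(r,t,ℓ)) ↦ [[ar, (n/r)b₀ + (t+rℓ)a], [cr, (n/r)d₀ + (t+rℓ)c]]`
is a bijection from the set of parameters `(a,c)` coprime, `r > 0`, `r ∣ n`,
`0 ≤ t < r`, `ℓ ∈ ℤ` onto the set of integer matrices of determinant `n`. -/
theorem det_n_matrix_parametrization (n : ℤ) (hn : 1 ≤ n)
    (bd : ℤ × ℤ → ℤ × ℤ)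
    (hbd : ∀ a c : ℤ, IsCoprime a c → a * (bd (a, c)).2 - (bd (a, c)).1 * c = 1) :
    Set.BijOn
      (fun q : (ℤ × ℤ) × ℤ × ℤ × ℤ =>
        !![q.1.1 * q.2.1, (n / q.2.1) * (bd q.1).1 + (q.2.2.1 + q.2.1 * q.2.2.2) * q.1.1;
           q.1.2 * q.2.1, (n / q.2.1) * (bd q.1).2 + (q.2.2.1 + q.2.1 * q.2.2.2) * q.1.2])
      {q : (ℤ × ℤ) × ℤ × ℤ × ℤ |
        IsCoprime q.1.1 q.1.2 ∧ 0 < q.2.1 ∧ q.2.1 ∣ n ∧ 0 ≤ q.2.2.1 ∧ q.2.2.1 < q.2.1}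
      {γ : Matrix (Fin 2) (Fin 2) ℤ | γ.det = n} := by
  refine ⟨?_, ?_, ?_⟩
  · -- MapsTo
    rintro ⟨⟨a, c⟩, r, t, l⟩ ⟨hco, hr, hrn, ht0, htr⟩
    simp only [Set.mem_setOf_eq, det_fin_two_of]
    have h1 := hbd a c hco
    obtain ⟨m, hm⟩ := hrn
    have hnr : n / r = m := by rw [hm]; exact Int.mul_ediv_cancel_left m hr.ne'
    rw [hnr, hm]
    linear_combination (r * m) * h1
  · -- InjOn
    rintro ⟨⟨a, c⟩, r, t, l⟩ ⟨hco, hr, hrn, ht0, htr⟩ ⟨⟨a', c'⟩, r', t', l'⟩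
      ⟨hco', hr', hrn', ht0', htr'⟩ hM
    simp only at hM
    have e00 : a * r = a' * r' := by
      have := congrFun (congrFun hM 0) 0; simpa using this
    have e10 : c * r = c' * r' := by
      have := congrFun (congrFun hM 1) 0; simpa using this
    have e01 : (n / r) * (bd (a, c)).1 + (t + r * l) * a
        = (n / r') * (bd (a', c')).1 + (t' + r' * l') * a' := by
      have := congrFun (congrFun hM 0) 1; simpa using this
    have e11 : (n / r) * (bd (a, c)).2 + (t + r * l) * c
        = (n / r') * (bd (a', c')).2 + (t' + r' * l') * c' := by
      have := congrFun (congrFun hM 1) 1; simpa using this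
    have hgcd : Int.gcd a c = 1 := Int.isCoprime_iff_gcd_eq_one.mp hco
    have hgcd' : Int.gcd a' c' = 1 := Int.isCoprime_iff_gcd_eq_one.mp hco'
    have hrr : r = r' := by
      have h1 : Int.gcd (a * r) (c * r) = r.natAbs := by
        rw [Int.gcd_mul_right, hgcd, one_mul]
      have h2 : Int.gcd (a' * r') (c' * r') = r'.natAbs := by
        rw [Int.gcd_mul_right, hgcd', one_mul]
      have h3 : r.natAbs = r'.natAbs := by rw [← h1, ← h2, e00, e10]
      have hrp : (0:ℤ) < r := hr
      have hrp' : (0:ℤ) < r' := hr'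
      omega
    subst hrr
    have ha : a = a' := mul_right_cancel₀ hr.ne' e00
    have hc : c = c' := mul_right_cancel₀ hr.ne' e10
    subst ha; subst hc
    have hA : (t + r * l) * a = (t' + r * l') * a := by linarith [e01]
    have hC : (t + r * l) * c = (t' + r * l') * c := by linarith [e11]
    obtain ⟨u, v, huv⟩ := hco
    have hs : t + r * l = t' + r * l' := by
      linear_combination u * hA + v * hC - (t + r * l - (t' + r * l')) * huv
    have ht : t = t' := by
      have h1 : t % r = t := Int.emod_eq_of_lt ht0 htr
      have h2 : t' % r = t' := Int.emod_eq_of_lt ht0' htr'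
      calc t = (t + r * l) % r := by rw [Int.add_mul_emod_self_left, h1]
        _ = (t' + r * l') % r := by rw [hs]
        _ = t' := by rw [Int.add_mul_emod_self_left, h2]
    subst ht
    have hl : l = l' := by
      have h4 : r * l = r * l' := by linarith
      exact mul_left_cancel₀ hr.ne' h4
    subst hl
    rfl
  · -- SurjOn
    intro γ hγ
    simp only [Set.mem_setOf_eq] at hγ
    have hdet : γ 0 0 * γ 1 1 - γ 0 1 * γ 1 0 = n := by
      rw [← hγ, Matrix.det_fin_two]
    set A := γ 0 0 with hA
    set B := γ 0 1 with hB
    set C := γ 1 0 with hC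
    set D := γ 1 1 with hD
    have hAC : A ≠ 0 ∨ C ≠ 0 := by
      by_contra h
      push_neg at h
      rw [h.1, h.2] at hdet
      simp at hdet
      omega
    have hg0 : 0 < Int.gcd A C := Int.gcd_pos_iff.mpr hAC
    set r : ℤ := (Int.gcd A C : ℤ) with hr
    have hr0 : 0 < r := by rw [hr]; exact_mod_cast hg0
    set a : ℤ := A / r with ha
    set c : ℤ := C / r with hc
    have haA : a * r = A := Int.ediv_mul_cancel (Int.gcd_dvd_left A C)
    have hcC : c * r = C := Int.ediv_mul_cancel (Int.gcd_dvd_right A C)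
    have hco : IsCoprime a c := by
      rw [Int.isCoprime_iff_gcd_eq_one]
      exact Int.gcd_div_gcd_div_gcd hg0
    have hbd1 := hbd a c hco
    have hn' : n = r * (a * D - c * B) := by
      rw [← hdet, ← haA, ← hcC]; ring
    have hnr : n / r = a * D - c * B := by
      rw [hn']; exact Int.mul_ediv_cancel_left _ hr0.ne'
    set s : ℤ := (bd (a, c)).2 * B - (bd (a, c)).1 * D with hsdef
    refine ⟨⟨⟨a, c⟩, r, s % r, s / r⟩,
      ⟨hco, hr0, ⟨a * D - c * B, hn'⟩, Int.emod_nonneg s hr0.ne', Int.emod_lt_of_pos s hr0⟩, ?_⟩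
    have hs : s % r + r * (s / r) = s := Int.emod_add_mul_ediv s r
    have h01 : (n / r) * (bd (a, c)).1 + (s % r + r * (s / r)) * a = B := by
      rw [hnr, hs]; linear_combination B * hbd1
    have h11 : (n / r) * (bd (a, c)).2 + (s % r + r * (s / r)) * c = D := by
      rw [hnr, hs]; linear_combination D * hbd1
    have hγeta : γ = !![A, B; C, D] := by
      rw [hA, hB, hC, hD]; exact Matrix.eta_fin_two γ
    simp only
    rw [hγeta, ← haA, ← hcC, ← h01, ← h11]
end
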